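/- Let 𝔤 be a finite-dimensional complex Lie algebra and let 𝔥 ⊆ 𝔤 be a Lie subalgebra of codimension one, i.e., dim_ℂ 𝔥 + 1 = dim_ℂ 𝔤. Then there exists a Lie ideal I of 𝔤 with I ⊆ 𝔥 and dim_ℂ(𝔤/I) ≤ 3. -/
import Mathlib


open Module

set_option linter.unusedSectionVars false

section LieTitsAux
variable {𝔤 : Type*} [LieRing 𝔤] [LieAlgebra ℂ 𝔤]

def brkInto (N : Submodule ℂ 𝔤) : Submodule ℂ 𝔤 where
  carrier := {x | ∀ y, ⁅x, y⁆ ∈ N}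
  add_mem' := by
    intro a b ha hb y
    rw [show ⁅a + b, y⁆ = ⁅a, y⁆ + ⁅b, y⁆ from add_lie a b y]
    exact N.add_mem (ha y) (hb y)
  zero_mem' := by intro y; rw [zero_lie]; exact N.zero_mem
  smul_mem' := by intro c x hx y; rw [smul_lie]; exact N.smul_mem c (hx y)

def Mfil (𝔥 : LieSubalgebra ℂ 𝔤) : ℕ → Submodule ℂ 𝔤
  | 0 => ⊤
  | 1 => 𝔥.toSubmodule
  | (n+2) => Mfil 𝔥 (n+1) ⊓ brkInto (Mfil 𝔥 (n+1))

variable (𝔥 : LieSubalgebra ℂ 𝔤)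

lemma Mfil_succ_le : ∀ n, Mfil 𝔥 (n+1) ≤ Mfil 𝔥 n
  | 0 => le_top
  | (n+1) => inf_le_left

lemma Mfil_antitone : Antitone (Mfil 𝔥) :=
  antitone_nat_of_succ_le (Mfil_succ_le 𝔥)

lemma Mfil_step {c : ℕ} (hc : 1 ≤ c) {u : 𝔤} (hu : u ∈ Mfil 𝔥 (c+1)) (v : 𝔤) :
    ⁅u, v⁆ ∈ Mfil 𝔥 c := by
  match c, hc with
  | (c+1), _ => exact hu.2 v

/-- key bracket estimate: `⁅Mfil a, Mfil b⁆ ⊆ Mfil (a + b - 1)`. -/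
lemma Mfil_lie : ∀ a b : ℕ, ∀ x y : 𝔤, x ∈ Mfil 𝔥 a → y ∈ Mfil 𝔥 b →
    ⁅x, y⁆ ∈ Mfil 𝔥 (a + b - 1) := by
  intro a b
  induction' hn : a + b using Nat.strong_induction_on with n IH generalizing a b
  subst hn
  match a, b with
  | 0, b =>
    intro x y _ hy
    match b with
    | 0 => simp [Mfil]
    | 1 => simp [Mfil]
    | (c+2) =>
      have h2 : -⁅y, x⁆ ∈ Mfil 𝔥 (c+1) :=
        Submodule.neg_mem _ (Mfil_step 𝔥 (by omega) hy x)
      rw [lie_skew] at h2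
      simpa using h2
  | (a+1), 0 =>
    intro x y hx _
    match a with
    | 0 => simp [Mfil]
    | (c+1) => simpa using Mfil_step 𝔥 (by omega) hx y
  | (a+1), (b+1) =>
    intro x y hx hy
    rcases Nat.eq_zero_or_pos (a + b) with hab | hab
    · -- a = b = 0 : subalgebra case
      obtain ⟨ha, hb⟩ : a = 0 ∧ b = 0 := by omega
      subst ha; subst hb
      exact 𝔥.lie_mem hx hy
    · have htarget : (a+1) + (b+1) - 1 = (a + b - 1) + 2 := by omega
      rw [htarget]
      have habeq : (a + b - 1) + 1 = a + b := by omega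
      refine ⟨?_, ?_⟩
      · rw [habeq]
        -- ⁅x,y⁆ ∈ Mfil (a+b)
        rcases Nat.eq_zero_or_pos b with hb | hb
        · subst hb
          simpa using Mfil_step 𝔥 (by omega) hx y
        · have hy' : y ∈ Mfil 𝔥 b := Mfil_succ_le 𝔥 b hy
          have := IH (a + 1 + b) (by omega) (a+1) b rfl x y hx hy'
          have he : a + 1 + b - 1 = a + b := by omega
          rwa [he] at this
      · intro z
        rw [habeq]
        rw [lie_lie]
        refine Submodule.sub_mem _ ?_ ?_
        · -- ⁅x, ⁅y, z⁆⁆ ∈ Mfil (a+b)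
          rcases Nat.eq_zero_or_pos b with hb | hb
          · subst hb
            simpa using Mfil_step 𝔥 (by omega) hx ⁅y, z⁆
          · have h1 : ⁅y, z⁆ ∈ Mfil 𝔥 b := Mfil_step 𝔥 hb hy z
            have := IH (a + 1 + b) (by omega) (a+1) b rfl x ⁅y, z⁆ hx h1
            have he : a + 1 + b - 1 = a + b := by omega
            rwa [he] at this
        · -- ⁅y, ⁅x, z⁆⁆ ∈ Mfil (a+b)
          rcases Nat.eq_zero_or_pos a with ha | ha
          · subst ha
            simpa using Mfil_step 𝔥 (by omega) hy ⁅x, z⁆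
          · have h1 : ⁅x, z⁆ ∈ Mfil 𝔥 a := Mfil_step 𝔥 ha hx z
            have := IH (b + 1 + a) (by omega) (b+1) a rfl y ⁅x, z⁆ hy h1
            have he : b + 1 + a - 1 = a + b := by omega
            rwa [he] at this

variable [FiniteDimensional ℂ 𝔤]

lemma finrank_hsub (hcodim : finrank ℂ 𝔥 + 1 = finrank ℂ 𝔤) :
    finrank ℂ (𝔥.toSubmodule : Submodule ℂ 𝔤) + 1 = finrank ℂ 𝔤 :=
  hcodim

lemma base0 (hcodim : finrank ℂ 𝔥 + 1 = finrank ℂ 𝔤) {u : 𝔤} (hu : u ∉ Mfil 𝔥 1) (v : 𝔤) :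
    ∃ a : ℂ, v - a • u ∈ Mfil 𝔥 1 := by
  have hu_mem : u ∈ 𝔥.toSubmodule ⊔ Submodule.span ℂ {u} :=
    Submodule.mem_sup_right (Submodule.mem_span_singleton_self u)
  have hlt : 𝔥.toSubmodule < 𝔥.toSubmodule ⊔ Submodule.span ℂ {u} := by
    refine lt_of_le_of_ne le_sup_left fun h => ?_
    rw [← h] at hu_mem
    exact hu hu_mem
  have h1 : finrank ℂ (𝔥.toSubmodule : Submodule ℂ 𝔤) <
      finrank ℂ (𝔥.toSubmodule ⊔ Submodule.span ℂ {u} : Submodule ℂ 𝔤) :=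
    Submodule.finrank_lt_finrank_of_lt hlt
  have h2 : finrank ℂ (𝔥.toSubmodule ⊔ Submodule.span ℂ {u} : Submodule ℂ 𝔤) ≤
      finrank ℂ 𝔤 := Submodule.finrank_le _
  have h3 : finrank ℂ (𝔥.toSubmodule ⊔ Submodule.span ℂ {u} : Submodule ℂ 𝔤) =
      finrank ℂ 𝔤 := by
    have := finrank_hsub 𝔥 hcodim
    omega
  have htop : 𝔥.toSubmodule ⊔ Submodule.span ℂ {u} = ⊤ :=
    Submodule.eq_top_of_finrank_eq h3
  have hv : v ∈ 𝔥.toSubmodule ⊔ Submodule.span ℂ {u} := htop ▸ Submodule.mem_top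
  obtain ⟨h, hh, z, hz, hsum⟩ := Submodule.mem_sup.mp hv
  obtain ⟨a, rfl⟩ := Submodule.mem_span_singleton.mp hz
  exact ⟨a, by rw [show v - a • u = h by rw [← hsum]; abel]; exact hh⟩

lemma crit (hcodim : finrank ℂ 𝔥 + 1 = finrank ℂ 𝔤) {e : 𝔤} (he : e ∉ Mfil 𝔥 1) {n : ℕ} {x : 𝔤}
    (hx : x ∈ Mfil 𝔥 (n+1)) (hxe : ⁅x, e⁆ ∈ Mfil 𝔥 (n+1)) : x ∈ Mfil 𝔥 (n+2) := by
  refine ⟨hx, fun y => ?_⟩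
  obtain ⟨a, hy⟩ := base0 𝔥 hcodim he y
  have h1 : ⁅x, y - a • e⁆ ∈ Mfil 𝔥 (n+1) := by
    have := Mfil_lie 𝔥 (n+1) 1 x (y - a • e) hx hy
    simpa using this
  have : ⁅x, y⁆ = ⁅x, y - a • e⁆ + a • ⁅x, e⁆ := by
    rw [lie_sub, lie_smul]; abel
  rw [this]
  exact Submodule.add_mem _ h1 (Submodule.smul_mem _ a hxe)

lemma exists_e (hcodim : finrank ℂ 𝔥 + 1 = finrank ℂ 𝔤) : ∃ e : 𝔤, e ∉ Mfil 𝔥 1 := by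
  by_contra h
  push_neg at h
  have : 𝔥.toSubmodule = ⊤ := by
    refine Submodule.eq_top_iff'.mpr fun x => h x
  have h2 : finrank ℂ (𝔥.toSubmodule : Submodule ℂ 𝔤) = finrank ℂ 𝔤 := by
    rw [this, finrank_top]
  have := finrank_hsub 𝔥 hcodim
  omega

lemma Qlem (hcodim : finrank ℂ 𝔥 + 1 = finrank ℂ 𝔤) : ∀ n : ℕ, ∀ u v : 𝔤, u ∈ Mfil 𝔥 n → u ∉ Mfil 𝔥 (n+1) → v ∈ Mfil 𝔥 n →
    ∃ a : ℂ, v - a • u ∈ Mfil 𝔥 (n+1) := by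
  intro n
  induction n with
  | zero => exact fun u v _ hu _ => base0 𝔥 hcodim hu v
  | succ n IH =>
    intro u v hu hu' hv
    obtain ⟨e, he⟩ := exists_e 𝔥 hcodim
    have hue : ⁅u, e⁆ ∈ Mfil 𝔥 n := by
      simpa using Mfil_lie 𝔥 (n+1) 0 u e hu Submodule.mem_top
    have hve : ⁅v, e⁆ ∈ Mfil 𝔥 n := by
      simpa using Mfil_lie 𝔥 (n+1) 0 v e hv Submodule.mem_top
    have hne : ⁅u, e⁆ ∉ Mfil 𝔥 (n+1) := fun hc => hu' (crit 𝔥 hcodim he hu hc)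
    obtain ⟨a, ha⟩ := IH ⁅u, e⁆ ⁅v, e⁆ hue hne hve
    have heq : ⁅v, e⁆ - a • ⁅u, e⁆ = ⁅v - a • u, e⁆ := by
      rw [sub_lie, smul_lie]
    rw [heq] at ha
    have hw : v - a • u ∈ Mfil 𝔥 (n+1) :=
      Submodule.sub_mem _ hv (Submodule.smul_mem _ a hu)
    exact ⟨a, crit 𝔥 hcodim he hw ha⟩

lemma core_contradiction (hcodim : finrank ℂ 𝔥 + 1 = finrank ℂ 𝔤)
    {K : ℕ} (hK : 3 ≤ K)
    (hstab : Mfil 𝔥 (K+1) = Mfil 𝔥 (K+2))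
    {gK : 𝔤} (hgK : gK ∈ Mfil 𝔥 K) (hgK' : gK ∉ Mfil 𝔥 (K+1)) : False := by
  obtain ⟨e, he⟩ := exists_e 𝔥 hcodim
  -- the descending chain of elements
  set f : ℕ → 𝔤 := fun i => Nat.rec gK (fun _ x => ⁅x, e⁆) i with hfdef
  have hf : ∀ i, f (i+1) = ⁅f i, e⁆ := fun i => rfl
  have hP : ∀ i, i ≤ K → f i ∈ Mfil 𝔥 (K - i) ∧ f i ∉ Mfil 𝔥 (K - i + 1) := by
    intro i
    induction i with
    | zero => intro _; simpa using ⟨hgK, hgK'⟩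
    | succ i IH =>
      intro hi
      obtain ⟨h1, h2⟩ := IH (by omega)
      obtain ⟨n, hn⟩ : ∃ n, K - i = n + 1 := ⟨K - i - 1, by omega⟩
      rw [hn] at h1 h2
      have hKi : K - (i+1) = n := by omega
      rw [hKi, hf]
      constructor
      · have := Mfil_lie 𝔥 (n+1) 0 (f i) e h1 Submodule.mem_top
        simpa using this
      · intro hc
        exact h2 (crit 𝔥 hcodim he h1 hc)
  set G : ℕ → 𝔤 := fun d => f (K - d) with hGdef
  have hGP : ∀ d, d ≤ K → G d ∈ Mfil 𝔥 d ∧ G d ∉ Mfil 𝔥 (d+1) := by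
    intro d hd
    have := hP (K - d) (by omega)
    rwa [show K - (K - d) = d from by omega] at this
  have hGrel : ∀ d, d + 1 ≤ K → ⁅G (d+1), e⁆ = G d := by
    intro d hd
    have h := hf (K - (d+1))
    rw [show K - (d+1) + 1 = K - d from by omega] at h
    exact h.symm
  -- the scalar μ
  obtain ⟨μ, hμ⟩ := base0 𝔥 hcodim he (G 0)
  have hμ0 : μ ≠ 0 := by
    intro h
    rw [h] at hμ
    simp only [zero_smul, sub_zero] at hμ
    exact (hGP 0 (by omega)).2 hμ
  -- J1 : eigenvalue relation for ad (G 1)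
  have hJ1 : ∀ j, j + 1 ≤ K →
      ⁅G 1, G (j+1)⁆ + ((j : ℂ) * μ) • G (j+1) ∈ Mfil 𝔥 (j+2) := by
    intro j
    induction j with
    | zero =>
      intro _
      simp [lie_self]
    | succ j IH =>
      intro hj
      have IH' := IH (by omega)
      set w := ⁅G 1, G (j+2)⁆ + (((j:ℂ)+1) * μ) • G (j+2) with hwdef
      have hw1 : w ∈ Mfil 𝔥 (j+2) := by
        refine Submodule.add_mem _ ?_ (Submodule.smul_mem _ _ (hGP (j+2) hj).1)
        have := Mfil_lie 𝔥 1 (j+2) (G 1) (G (j+2)) (hGP 1 (by omega)).1 (hGP (j+2) hj).1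
        simpa using this
      have hB : ⁅G (j+2), G 0 - μ • e⁆ ∈ Mfil 𝔥 (j+2) := by
        have := Mfil_lie 𝔥 (j+2) 1 (G (j+2)) (G 0 - μ • e) (hGP (j+2) hj).1 hμ
        simpa using this
      have hexp : ⁅w, e⁆ =
          (⁅G 1, G (j+1)⁆ + ((j : ℂ) * μ) • G (j+1)) - ⁅G (j+2), G 0 - μ • e⁆ := by
        rw [hwdef, add_lie, smul_lie, lie_lie, hGrel (j+1) hj, hGrel 0 (by omega),
          lie_sub, lie_smul, hGrel (j+1) hj]
        module
      have hwe : ⁅w, e⁆ ∈ Mfil 𝔥 (j+2) := by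
        rw [hexp]
        exact Submodule.sub_mem _ IH' hB
      have := crit 𝔥 hcodim he hw1 hwe
      have hcast : ((j+1 : ℕ) : ℂ) * μ = ((j:ℂ)+1) * μ := by push_cast; ring
      rw [hcast]
      exact this
  -- J2 : the a-coefficients
  set A : ℕ → ℂ := fun i => (1 - (i:ℂ) * ((i:ℂ)+1)/2) * μ with hAdef
  have hJ2 : ∀ i, 1 ≤ i → i + 2 ≤ K →
      ⁅G 2, G (i+1)⁆ - A i • G (i+2) ∈ Mfil 𝔥 (i+3) := by
    intro i hi1
    induction i, hi1 using Nat.le_induction with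
    | base =>
      intro _
      have hA1 : A 1 = 0 := by simp only [hAdef]; norm_num
      simp [lie_self, hA1]
    | succ i hi IH =>
      intro hi2
      have IH' := IH (by omega)
      set w := ⁅G 2, G (i+2)⁆ - A (i+1) • G (i+3) with hwdef
      have hw1 : w ∈ Mfil 𝔥 (i+3) := by
        refine Submodule.sub_mem _ ?_ (Submodule.smul_mem _ _ (hGP (i+3) (by omega)).1)
        have := Mfil_lie 𝔥 2 (i+2) (G 2) (G (i+2)) (hGP 2 (by omega)).1
          (hGP (i+2) (by omega)).1
        rw [show 2 + (i+2) - 1 = i + 3 from by omega] at this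
        exact this
      have hJ1' := hJ1 (i+1) (by omega)
      have hexp : ⁅w, e⁆ =
          (⁅G 2, G (i+1)⁆ - A i • G (i+2))
          + (⁅G 1, G (i+2)⁆ + (((i:ℂ)+1) * μ) • G (i+2))
          + (A i - ((i:ℂ)+1) * μ - A (i+1)) • G (i+2) := by
        rw [hwdef, sub_lie, smul_lie, lie_lie, hGrel (i+1) (by omega),
          hGrel 1 (by omega), hGrel (i+2) (by omega)]
        have h1 : ⁅G (i+2), G 1⁆ = -⁅G 1, G (i+2)⁆ := by
          rw [← lie_skew]
        rw [h1]
        module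
      have hcoef : A i - ((i:ℂ)+1) * μ - A (i+1) = 0 := by
        simp only [hAdef]
        push_cast
        ring
      have hwe : ⁅w, e⁆ ∈ Mfil 𝔥 (i+3) := by
        rw [hexp, hcoef, zero_smul, add_zero]
        refine Submodule.add_mem _ IH' ?_
        have hcast : (((i+1:ℕ)):ℂ) * μ = ((i:ℂ)+1) * μ := by push_cast; ring
        rw [← hcast]
        exact hJ1'
      exact crit 𝔥 hcodim he hw1 hwe
  -- final contradiction
  obtain ⟨m, rfl⟩ : ∃ m, K = m + 3 := ⟨K - 3, by omega⟩
  set K := m + 3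
  have h2 := hJ2 (m+1) (by omega) (by omega)
  have h1 := hJ1 (m+2) (by omega)
  have hb : ⁅G 2, G K⁆ ∈ Mfil 𝔥 (K+2) := by
    have := Mfil_lie 𝔥 2 K (G 2) (G K) (hGP 2 (by omega)).1 (hGP K (by omega)).1
    rw [show 2 + K - 1 = K + 1 from by omega] at this
    rw [← hstab]
    exact this
  have hX : ⁅G 2, G (m+2)⁆ + ⁅G 1, G (m+3)⁆ ∈ Mfil 𝔥 (K+1) := by
    have h := hb.2 e
    rw [lie_lie, hGrel (m+2) (by omega), hGrel 1 (by omega)] at h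
    have h1' : ⁅G (m+3), G 1⁆ = -⁅G 1, G (m+3)⁆ := by rw [← lie_skew]
    rw [h1', sub_neg_eq_add] at h
    exact h
  rw [show m+1+1 = m+2 from by omega, show m+1+2 = m+3 from by omega,
    show m+1+3 = K+1 from by omega] at h2
  rw [show m+2+1 = m+3 from by omega, show m+2+2 = K+1 from by omega] at h1
  have hfinal : (A (m+1) - ((m+2:ℕ):ℂ) * μ) • G (m+3) ∈ Mfil 𝔥 (K+1) := by
    have hs := Submodule.sub_mem _ (Submodule.sub_mem _ hX h2) h1
    have heq : ⁅G 2, G (m+2)⁆ + ⁅G 1, G (m+3)⁆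
        - (⁅G 2, G (m+2)⁆ - A (m+1) • G (m+3))
        - (⁅G 1, G (m+3)⁆ + (((m+2:ℕ):ℂ) * μ) • G (m+3))
        = (A (m+1) - ((m+2:ℕ):ℂ) * μ) • G (m+3) := by
      module
    rwa [heq] at hs
  have hc0 : A (m+1) - ((m+2:ℕ):ℂ) * μ ≠ 0 := by
    simp only [hAdef]
    intro h
    apply hμ0
    have h2c : ((2:ℂ) - ((m:ℂ)+2)*((m:ℂ)+3)) * μ = 0 := by
      push_cast at h ⊢
      linear_combination 2*h
    rcases mul_eq_zero.mp h2c with h3 | h3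
    · exfalso
      have h4 : (((m+2)*(m+3) : ℕ) : ℂ) = 2 := by push_cast; linear_combination -h3
      have h5 : ((m+2)*(m+3) : ℕ) = 2 := by exact_mod_cast h4
      nlinarith [h5]
    · exact h3
  refine (hGP K (le_refl K)).2 ?_
  have hsm := Submodule.smul_mem (Mfil 𝔥 (K+1)) (A (m+1) - ((m+2:ℕ):ℂ) * μ)⁻¹ hfinal
  rw [smul_smul, inv_mul_cancel₀ hc0, one_smul] at hsm
  exact hsm

theorem lie_tits_dim_le_three'
    (hcodim : finrank ℂ 𝔥 + 1 = finrank ℂ 𝔤) :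
    ∃ I : LieIdeal ℂ 𝔤, (I : Set 𝔤) ⊆ (𝔥 : Set 𝔤) ∧ finrank ℂ (𝔤 ⧸ I) ≤ 3 := by
  classical
  have hD : finrank ℂ (𝔥.toSubmodule : Submodule ℂ 𝔤) + 1 = finrank ℂ 𝔤 := hcodim
  -- the filtration stabilizes
  have hex : ∃ N, Mfil 𝔥 N = Mfil 𝔥 (N+1) := by
    by_contra hc
    push_neg at hc
    have hdec : ∀ n, finrank ℂ (Mfil 𝔥 n) + n ≤ finrank ℂ 𝔤 := by
      intro n
      induction n with
      | zero =>
        have : Mfil 𝔥 0 = (⊤ : Submodule ℂ 𝔤) := rfl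
        rw [this]
        simp [finrank_top]
      | succ n IH =>
        have hlt : Mfil 𝔥 (n+1) < Mfil 𝔥 n :=
          lt_of_le_of_ne (Mfil_succ_le 𝔥 n) (fun h => hc n h.symm)
        have := Submodule.finrank_lt_finrank_of_lt hlt
        omega
    have := hdec (finrank ℂ 𝔤 + 1)
    omega
  set Nstar := Nat.find hex with hNdef
  have hNspec : Mfil 𝔥 Nstar = Mfil 𝔥 (Nstar+1) := Nat.find_spec hex
  have hNmin : ∀ m, m < Nstar → Mfil 𝔥 m ≠ Mfil 𝔥 (m+1) := fun m hm => Nat.find_min hex hm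
  have hN1 : 1 ≤ Nstar := by
    rcases Nat.eq_zero_or_pos Nstar with h0 | h; swap
    · exact h
    exfalso
    rw [h0] at hNspec
    have h1 : (⊤ : Submodule ℂ 𝔤) = 𝔥.toSubmodule := hNspec
    have : finrank ℂ (𝔥.toSubmodule : Submodule ℂ 𝔤) = finrank ℂ 𝔤 := by
      rw [← h1, finrank_top]
    omega
  have hN3 : Nstar ≤ 3 := by
    by_contra hc
    push_neg at hc
    obtain ⟨K, hKeq⟩ : ∃ K, Nstar = K + 1 := ⟨Nstar - 1, by omega⟩
    have hK3 : 3 ≤ K := by omega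
    have hstab : Mfil 𝔥 (K+1) = Mfil 𝔥 (K+2) := by
      rw [show K + 2 = Nstar + 1 from by omega, show K + 1 = Nstar from by omega]
      exact hNspec
    have hne : Mfil 𝔥 K ≠ Mfil 𝔥 (K+1) := hNmin K (by omega)
    have hlt : Mfil 𝔥 (K+1) < Mfil 𝔥 K :=
      lt_of_le_of_ne (Mfil_succ_le 𝔥 K) (fun h => hne h.symm)
    obtain ⟨x, hx, hx'⟩ := SetLike.exists_of_lt hlt
    exact core_contradiction 𝔥 hcodim hK3 hstab hx hx'
  -- the ideal
  obtain ⟨p, hp⟩ : ∃ p, Nstar = p + 1 := ⟨Nstar - 1, by omega⟩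
  have hideal : ∀ x ∈ Mfil 𝔥 Nstar, ∀ y : 𝔤, ⁅x, y⁆ ∈ Mfil 𝔥 Nstar := by
    intro x hx y
    rw [hNspec, hp] at hx
    have := hx.2 y
    rwa [hp]
  refine ⟨{ toSubmodule := Mfil 𝔥 Nstar
            lie_mem := ?_ }, ?_, ?_⟩
  · intro x m hm
    have h1 : ⁅m, x⁆ ∈ Mfil 𝔥 Nstar := hideal m hm x
    have h2 : -⁅m, x⁆ ∈ Mfil 𝔥 Nstar := Submodule.neg_mem _ h1
    rw [lie_skew] at h2
    exact h2
  · intro x hx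
    have hx' : x ∈ Mfil 𝔥 Nstar := hx
    have : x ∈ Mfil 𝔥 1 := Mfil_antitone 𝔥 hN1 hx'
    exact this
  · -- dimension bound
    have hlow : ∀ n : ℕ, finrank ℂ 𝔤 ≤ finrank ℂ (Mfil 𝔥 (n+1)) + (n+1) := by
      intro n
      induction n with
      | zero =>
        have : Mfil 𝔥 1 = 𝔥.toSubmodule := rfl
        rw [this]
        omega
      | succ n IH =>
        show finrank ℂ 𝔤 ≤ finrank ℂ (Mfil 𝔥 (n+2)) + (n+2)
        have hstep : finrank ℂ (Mfil 𝔥 (n+1)) ≤ finrank ℂ (Mfil 𝔥 (n+2)) + 1 := by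
          rcases eq_or_ne (Mfil 𝔥 (n+1)) (Mfil 𝔥 (n+2)) with heq | hne
          · rw [heq]; omega
          · have hlt : Mfil 𝔥 (n+2) < Mfil 𝔥 (n+1) :=
              lt_of_le_of_ne (Mfil_succ_le 𝔥 (n+1)) (fun h => hne h.symm)
            obtain ⟨u, hu, hu'⟩ := SetLike.exists_of_lt hlt
            have hle : Mfil 𝔥 (n+1) ≤ Mfil 𝔥 (n+2) ⊔ Submodule.span ℂ {u} := by
              intro v hv
              obtain ⟨a, ha⟩ := Qlem 𝔥 hcodim (n+1) u v hu hu' hv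
              have : v = (v - a • u) + a • u := by abel
              rw [this]
              exact Submodule.add_mem _ (Submodule.mem_sup_left ha)
                (Submodule.mem_sup_right (Submodule.smul_mem _ a
                  (Submodule.mem_span_singleton_self u)))
            have h1 : finrank ℂ (Mfil 𝔥 (n+1)) ≤
                finrank ℂ (Mfil 𝔥 (n+2) ⊔ Submodule.span ℂ {u} : Submodule ℂ 𝔤) :=
              Submodule.finrank_mono hle
            have h2 := Submodule.finrank_sup_add_finrank_inf_eq
              (Mfil 𝔥 (n+2)) (Submodule.span ℂ {u})
            have h3 : finrank ℂ (Submodule.span ℂ {u} : Submodule ℂ 𝔤) = 1 := by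
              apply finrank_span_singleton
              intro h0
              rw [h0] at hu'
              exact hu' (Submodule.zero_mem _)
            omega
        omega
    have hq := Submodule.finrank_quotient_add_finrank (Mfil 𝔥 Nstar)
    have hlowN : finrank ℂ 𝔤 ≤ finrank ℂ (Mfil 𝔥 Nstar) + Nstar := by
      rw [hp]
      exact hlow p
    show finrank ℂ (𝔤 ⧸ (Mfil 𝔥 Nstar)) ≤ 3
    omega

end LieTitsAux

/-- If `𝔥` is a codimension one Lie subalgebra of a finite-dimensional
complex Lie algebra `𝔤`, then there is a Lie ideal `I` of `𝔤` contained in `𝔥` with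
`dim_ℂ (𝔤 ⧸ I) ≤ 3`. -/
theorem lie_tits_dim_le_three
    (𝔤 : Type*) [LieRing 𝔤] [LieAlgebra ℂ 𝔤] [FiniteDimensional ℂ 𝔤]
    (𝔥 : LieSubalgebra ℂ 𝔤)
    (hcodim : finrank ℂ 𝔥 + 1 = finrank ℂ 𝔤) :
    ∃ I : LieIdeal ℂ 𝔤, (I : Set 𝔤) ⊆ (𝔥 : Set 𝔤) ∧ finrank ℂ (𝔤 ⧸ I) ≤ 3 := by
  exact lie_tits_dim_le_three' 𝔥 hcodim
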